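/- Let E be a real normed vector space and x : ℝ → E a differentiable function such that ‖x'(t)‖ → 0 as t → ∞. Let (t_n) be a strictly increasing sequence of real numbers tending to ∞ and p ∈ E such that x(t_n) → p as n → ∞. Then for every ε ∈ ℝ, x(t_n + ε) → p as n → ∞. -/

import Mathlib

open Filter Topology

/-- If `x : ℝ → E` is differentiable with `‖x' t‖ → 0` as `t → ∞`, and `x (t n) → p`
along a strictly increasing sequence `t n → ∞`, then `x (t n + ε) → p` for every `ε`. -/
theorem stmt_2 {E : Type*} [NormedAddCommGroup E] [NormedSpace ℝ E]
    (x : ℝ → E) (x' : ℝ → E) (hderiv : ∀ t, HasDerivAt x (x' t) t)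
    (hlim : Tendsto (fun t => ‖x' t‖) atTop (𝓝 0))
    (t : ℕ → ℝ) (ht : StrictMono t) (htlim : Tendsto t atTop atTop)
    (p : E) (hp : Tendsto (fun n => x (t n)) atTop (𝓝 p)) :
    ∀ ε : ℝ, Tendsto (fun n => x (t n + ε)) atTop (𝓝 p) := by
  intro ε
  have hdiff : Tendsto (fun n => x (t n + ε) - x (t n)) atTop (𝓝 0) := by
    rw [NormedAddCommGroup.tendsto_nhds_zero]
    intro δ hδ
    set C : ℝ := δ / (2 * (|ε| + 1)) with hC
    have hε1 : (0:ℝ) < |ε| + 1 := by positivity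
    have hCpos : 0 < C := by positivity
    have hCε : C * |ε| < δ := by
      have h1 : C * |ε| ≤ C * (|ε| + 1) := by nlinarith
      have h2 : C * (|ε| + 1) = δ / 2 := by rw [hC, div_mul_eq_mul_div, mul_div_mul_right _ _ hε1.ne']
      linarith
    have hT : ∀ᶠ s in atTop, ‖x' s‖ ≤ C := by
      have := (hlim.eventually (eventually_le_nhds (show (0:ℝ) < C from hCpos)))
      exact this
    obtain ⟨T, hTbd⟩ := hT.exists_forall_of_atTop
    filter_upwards [htlim.eventually (eventually_ge_atTop (T + |ε|))] with n hn
    have hsub : Set.uIcc (t n) (t n + ε) ⊆ Set.Ici T := by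
      intro s hs
      have h1 : min (t n) (t n + ε) ≤ s := (Set.mem_uIcc.mp hs).elim
        (fun h => le_trans (min_le_left _ _) h.1) (fun h => le_trans (min_le_right _ _) h.1)
      have hε' : -|ε| ≤ ε := neg_abs_le ε
      have : T ≤ min (t n) (t n + ε) := le_min (by linarith [abs_nonneg ε]) (by linarith)
      exact le_trans this h1
    have key : ‖x (t n + ε) - x (t n)‖ ≤ C * ‖(t n + ε) - t n‖ := by
      apply (convex_uIcc (t n) (t n + ε)).norm_image_sub_le_of_norm_hasDerivWithin_le
        (fun s hs => (hderiv s).hasDerivWithinAt)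
        (fun s hs => hTbd s (hsub hs))
        Set.left_mem_uIcc Set.right_mem_uIcc
    have : ‖(t n + ε) - t n‖ = |ε| := by rw [add_sub_cancel_left, Real.norm_eq_abs]
    rw [this] at key
    exact lt_of_le_of_lt key hCε
  have := hp.add hdiff
  simpa using this
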